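/- Classical substate theorem: Let P and Q be probability distributions on Fin n with supp(P) ⊆ supp(Q) and S(P‖Q) ≤ c. Then for every real r > 1 there exist probability distributions P' and P'' on Fin n such that ‖P − P'‖₁ ≤ 2/r and Q = α·P' + (1−α)·P'', where α := (r−1)/(r·2^{r(c+1)}). -/

import Mathlib

open Matrix BigOperators
open scoped ComplexOrder

noncomputable section

/-- A quantum state: positive semidefinite matrix with unit trace. -/
def IsState {d : Type*} [Fintype d] (ρ : Matrix d d ℂ) : Prop :=
  ρ.PosSemidef ∧ ρ.trace = 1

/-- `SuppLE ρ σ` : the support of `ρ` is contained in the support of `σ`,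
expressed as inclusion of kernels the other way. -/
def SuppLE {d : Type*} [Fintype d] (ρ σ : Matrix d d ℂ) : Prop :=
  ∀ v : d → ℂ, σ *ᵥ v = 0 → ρ *ᵥ v = 0

/-- Matrix logarithm: apply `Real.log` to the eigenvalues (with `log 0 = 0`). -/
noncomputable def matLog {d : Type*} [Fintype d] [DecidableEq d]
    (ρ : Matrix d d ℂ) : Matrix d d ℂ :=
  if h : ρ.IsHermitian then
    (h.eigenvectorUnitary : Matrix d d ℂ) *
      Matrix.diagonal (fun i => (Real.log (h.eigenvalues i) : ℂ)) *
      (star (h.eigenvectorUnitary : Matrix d d ℂ))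
  else 0

/-- Quantum relative entropy `S(ρ‖σ) = Re Tr (ρ (log ρ - log σ))`. -/
noncomputable def relEnt {d : Type*} [Fintype d] [DecidableEq d]
    (ρ σ : Matrix d d ℂ) : ℝ :=
  (Matrix.trace (ρ * (matLog ρ - matLog σ))).re

/-- Trace norm of a Hermitian matrix: sum of absolute values of eigenvalues. -/
noncomputable def traceNorm {d : Type*} [Fintype d] [DecidableEq d]
    (A : Matrix d d ℂ) : ℝ :=
  if h : A.IsHermitian then ∑ i, |h.eigenvalues i| else 0

/-- Rank-one operator `|ψ⟩⟨ψ|`. -/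
def ketbra {d : Type*} (ψ : d → ℂ) : Matrix d d ℂ :=
  Matrix.of fun a b => ψ a * (starRingEnd ℂ) (ψ b)

/-- A POVM element: a positive semidefinite matrix `F` with `1 - F` positive semidefinite. -/
def IsPOVMElem {d : Type*} [Fintype d] [DecidableEq d] (F : Matrix d d ℂ) : Prop :=
  F.PosSemidef ∧ ((1 : Matrix d d ℂ) - F).PosSemidef

/-- `trR F ρ = Re Tr (F ρ)`. -/
noncomputable def trR {d : Type*} [Fintype d] (F ρ : Matrix d d ℂ) : ℝ :=
  (Matrix.trace (F * ρ)).re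

/-- Observational divergence `D(ρ‖σ)`. -/
noncomputable def obsDiv {d : Type*} [Fintype d] [DecidableEq d]
    (ρ σ : Matrix d d ℂ) : ℝ :=
  sSup {x : ℝ | ∃ F : Matrix d d ℂ, IsPOVMElem F ∧ trR F σ ≠ 0 ∧
    x = trR F ρ * Real.logb 2 (trR F ρ / trR F σ)}

/-- A probability distribution on `Fin n`. -/
def IsProbDist {n : ℕ} (P : Fin n → ℝ) : Prop :=
  (∀ i, 0 ≤ P i) ∧ ∑ i, P i = 1

/-- Classical relative entropy (base 2); terms with `P i = 0` contribute `0`. -/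
noncomputable def cRelEnt {n : ℕ} (P Q : Fin n → ℝ) : ℝ :=
  ∑ i, P i * Real.logb 2 (P i / Q i)

/-- Classical observational divergence. -/
noncomputable def cObsDiv {n : ℕ} (P Q : Fin n → ℝ) : ℝ :=
  sSup {x : ℝ | ∃ f : Fin n → ℝ, (∀ i, 0 ≤ f i ∧ f i ≤ 1) ∧
    (∑ i, f i * Q i) ≠ 0 ∧
    x = (∑ i, f i * P i) * Real.logb 2 ((∑ i, f i * P i) / (∑ i, f i * Q i))}



/-- `x log x ≥ -1/e`, packaged against `log 2`. -/
lemma mul_log_ge_neg_log_two (a b : ℝ) (ha0 : 0 ≤ a) (hb0 : 0 ≤ b) (hb1 : b ≤ 1) :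
    -Real.log 2 ≤ a * Real.log (a / b) := by
  have hlog2 : (0.6931471803 : ℝ) < Real.log 2 := Real.log_two_gt_d9
  rcases eq_or_lt_of_le hb0 with hb | hb
  · simp [← hb, Real.log_zero]
    linarith
  rcases eq_or_lt_of_le ha0 with ha | ha
  · simp [← ha]
    linarith
  have hab : a ≤ a / b := by
    rw [le_div_iff₀ hb]
    exact mul_le_of_le_one_right ha0 hb1
  have h1 : Real.log a ≤ Real.log (a / b) := Real.log_le_log ha hab
  have h2 : a * Real.log a ≤ a * Real.log (a / b) :=
    mul_le_mul_of_nonneg_left h1 ha0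
  -- a log a ≥ -1/e
  have he : (0 : ℝ) < Real.exp 1 := Real.exp_pos 1
  have key : Real.log (1 / (a * Real.exp 1)) ≤ 1 / (a * Real.exp 1) - 1 :=
    Real.log_le_sub_one_of_pos (by positivity)
  rw [Real.log_div one_ne_zero (by positivity), Real.log_one,
    Real.log_mul (ne_of_gt ha) (ne_of_gt he), Real.log_exp] at key
  -- key : 0 - (log a + 1) ≤ 1/(a e) - 1
  have h3 : -Real.log a ≤ 1 / (a * Real.exp 1) := by linarith
  have h4 : a * (-Real.log a) ≤ a * (1 / (a * Real.exp 1)) :=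
    mul_le_mul_of_nonneg_left h3 ha0
  have h5 : a * (1 / (a * Real.exp 1)) = 1 / Real.exp 1 := by
    field_simp
  rw [h5] at h4
  have he27 : (2.7182818283 : ℝ) < Real.exp 1 := Real.exp_one_gt_d9
  have h6 : 1 / Real.exp 1 < 0.6931471803 := by
    rw [div_lt_iff₀ he]
    nlinarith
  linarith

/-- Log-sum inequality over a finset. -/
lemma log_sum_ineq {n : ℕ} (P Q : Fin n → ℝ) (hP0 : ∀ i, 0 ≤ P i) (hQ0 : ∀ i, 0 ≤ Q i)
    (hsupp : ∀ i, Q i = 0 → P i = 0) (S : Finset (Fin n)) :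
    (∑ i ∈ S, P i) * Real.log ((∑ i ∈ S, P i) / (∑ i ∈ S, Q i)) ≤
      ∑ i ∈ S, P i * Real.log (P i / Q i) := by
  set a := ∑ i ∈ S, P i with ha
  set b := ∑ i ∈ S, Q i with hb
  have ha0 : 0 ≤ a := Finset.sum_nonneg fun i _ => hP0 i
  rcases eq_or_lt_of_le ha0 with ha' | ha'
  · have hall : ∀ i ∈ S, P i = 0 :=
      (Finset.sum_eq_zero_iff_of_nonneg fun i _ => hP0 i).mp ha'.symm
    rw [← ha', zero_mul]
    apply Finset.sum_nonneg
    intro i hi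
    rw [hall i hi]; simp
  have hb' : 0 < b := by
    rcases eq_or_lt_of_le (Finset.sum_nonneg fun i (_ : i ∈ S) => hQ0 i) with h | h
    · exfalso
      have hallQ : ∀ i ∈ S, Q i = 0 :=
        (Finset.sum_eq_zero_iff_of_nonneg fun i _ => hQ0 i).mp h.symm
      have : a = 0 := Finset.sum_eq_zero fun i hi => hsupp i (hallQ i hi)
      linarith
    · exact h
  have key : ∀ i ∈ S, P i * Real.log (a / b) + (P i - Q i * (a / b)) ≤
      P i * Real.log (P i / Q i) := by
    intro i _
    rcases eq_or_lt_of_le (hP0 i) with hPi | hPi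
    · rw [← hPi]
      have : 0 ≤ Q i * (a / b) := mul_nonneg (hQ0 i) (div_nonneg ha0 hb'.le)
      simp; linarith [this]
    have hQi : 0 < Q i := by
      rcases eq_or_lt_of_le (hQ0 i) with h | h
      · exfalso; have := hsupp i h.symm; linarith
      · exact h
    have hkey : Real.log (Q i * a / (P i * b)) ≤ Q i * a / (P i * b) - 1 :=
      Real.log_le_sub_one_of_pos (by positivity)
    rw [Real.log_div (by positivity) (by positivity),
      Real.log_mul (ne_of_gt hQi) (ne_of_gt ha'),
      Real.log_mul (ne_of_gt hPi) (ne_of_gt hb')] at hkey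
    have h2 := mul_le_mul_of_nonneg_left hkey (le_of_lt hPi)
    have h3 : P i * (Q i * a / (P i * b) - 1) = Q i * (a / b) - P i := by
      field_simp
    rw [Real.log_div (ne_of_gt ha') (ne_of_gt hb'),
      Real.log_div (ne_of_gt hPi) (ne_of_gt hQi)]
    nlinarith [h2, h3]
  calc a * Real.log (a / b)
      = ∑ i ∈ S, (P i * Real.log (a / b) + (P i - Q i * (a / b))) := by
        rw [Finset.sum_add_distrib, Finset.sum_sub_distrib, ← Finset.sum_mul,
          ← Finset.sum_mul, ← ha, ← hb]
        field_simp
        ring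
    _ ≤ ∑ i ∈ S, P i * Real.log (P i / Q i) := Finset.sum_le_sum key

/-- Classical substate theorem. -/
theorem classical_substate_theorem {n : ℕ} (P Q : Fin n → ℝ)
    (hP : IsProbDist P) (hQ : IsProbDist Q)
    (hsupp : ∀ i, Q i = 0 → P i = 0)
    (c : ℝ) (hc : cRelEnt P Q ≤ c)
    (r : ℝ) (hr : 1 < r)
    (α : ℝ) (hα : α = (r - 1) / (r * (2 : ℝ) ^ (r * (c + 1)))) :
    ∃ P' P'' : Fin n → ℝ, IsProbDist P' ∧ IsProbDist P'' ∧
      (∑ i, |P i - P' i|) ≤ 2 / r ∧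
      ∀ i, Q i = α * P' i + (1 - α) * P'' i := by
  classical
  obtain ⟨hP0, hPs⟩ := hP
  obtain ⟨hQ0, hQs⟩ := hQ
  have hlog2 : (0 : ℝ) < Real.log 2 := Real.log_pos one_lt_two
  have hr0 : (0 : ℝ) < r := lt_trans one_pos hr
  -- total log-form relative entropy
  have hsum_eq : ∑ i, P i * Real.log (P i / Q i) = cRelEnt P Q * Real.log 2 := by
    unfold cRelEnt
    rw [Finset.sum_mul]
    apply Finset.sum_congr rfl
    intro i _
    rw [Real.logb, div_eq_mul_inv]
    field_simp
  -- nonnegativity of c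
  have hRE0 : 0 ≤ cRelEnt P Q := by
    have h := log_sum_ineq P Q hP0 hQ0 hsupp Finset.univ
    rw [hPs, hQs, hsum_eq] at h
    simp at h
    nlinarith [h, hlog2]
  have hc0 : (0 : ℝ) ≤ c := le_trans hRE0 hc
  have hc1 : (0 : ℝ) < c + 1 := by linarith
  set k : ℝ := (2 : ℝ) ^ (r * (c + 1)) with hk
  have hk0 : 0 < k := Real.rpow_pos_of_pos two_pos _
  have hlogk : Real.log k = r * (c + 1) * Real.log 2 := Real.log_rpow two_pos _
  have hk2 : (2 : ℝ) ≤ k := by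
    calc (2 : ℝ) = (2 : ℝ) ^ (1 : ℝ) := (Real.rpow_one 2).symm
    _ ≤ k := Real.rpow_le_rpow_of_exponent_le one_le_two (by nlinarith)
  set A : Finset (Fin n) := Finset.univ.filter (fun i => k * Q i < P i) with hA
  set ε : ℝ := ∑ i ∈ A, P i with hε
  clear_value ε
  have hε0 : 0 ≤ ε := by rw [hε]; exact Finset.sum_nonneg fun i _ => hP0 i
  have hsplitP : ε + ∑ i ∈ Finset.univ.filter (fun i => ¬ k * Q i < P i), P i = 1 := by
    rw [hε, hA, Finset.sum_filter_add_sum_filter_not, hPs]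
  have hQAc1 : ∑ i ∈ Finset.univ.filter (fun i => ¬ k * Q i < P i), Q i ≤ 1 := by
    rw [← hQs]
    exact Finset.sum_le_sum_of_subset_of_nonneg (Finset.filter_subset _ _)
      (fun i _ _ => hQ0 i)
  have hQAc0 : 0 ≤ ∑ i ∈ Finset.univ.filter (fun i => ¬ k * Q i < P i), Q i :=
    Finset.sum_nonneg fun i _ => hQ0 i
  -- Qi > 0 on A
  have hQpos : ∀ i ∈ A, 0 < Q i ∧ k * Q i < P i := by
    intro i hi
    rw [hA, Finset.mem_filter] at hi
    have h2 := hi.2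
    rcases eq_or_lt_of_le (hQ0 i) with h | h
    · exfalso
      have := hsupp i h.symm
      rw [this, ← h] at h2
      simp at h2
    · exact ⟨h, h2⟩
  -- bound on the A part
  have hApart : ε * (r * (c + 1) * Real.log 2) ≤ ∑ i ∈ A, P i * Real.log (P i / Q i) := by
    rw [hε, Finset.sum_mul]
    apply Finset.sum_le_sum
    intro i hi
    obtain ⟨hQi, hlt⟩ := hQpos i hi
    have hPi : 0 < P i := lt_of_le_of_lt (by positivity) hlt
    have hdiv : k ≤ P i / Q i := by
      rw [le_div_iff₀ hQi]; linarith
    have := Real.log_le_log hk0 hdiv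
    rw [hlogk] at this
    exact mul_le_mul_of_nonneg_left this (hP0 i)
  -- bound on the complement part
  have hAcpart : -Real.log 2 ≤
      ∑ i ∈ Finset.univ.filter (fun i => ¬ k * Q i < P i), P i * Real.log (P i / Q i) := by
    refine le_trans ?_ (log_sum_ineq P Q hP0 hQ0 hsupp _)
    exact mul_log_ge_neg_log_two _ _ (Finset.sum_nonneg fun i _ => hP0 i) hQAc0 hQAc1
  -- combine
  have hεr : ε * r ≤ 1 := by
    have hsplit : (∑ i ∈ A, P i * Real.log (P i / Q i)) +
        ∑ i ∈ Finset.univ.filter (fun i => ¬ k * Q i < P i), P i * Real.log (P i / Q i) =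
        cRelEnt P Q * Real.log 2 := by
      rw [hA, Finset.sum_filter_add_sum_filter_not, hsum_eq]
    have h1 : ε * (r * (c + 1) * Real.log 2) - Real.log 2 ≤ c * Real.log 2 := by
      have := mul_le_mul_of_nonneg_right hc hlog2.le
      linarith
    have h2 : ε * (r * (c + 1)) - 1 ≤ c := by
      have := (mul_le_mul_iff_of_pos_right hlog2).mp (by linarith : (ε * (r * (c + 1)) - 1) * Real.log 2 ≤ c * Real.log 2)
      exact this
    have h3 : ε * r * (c + 1) ≤ c + 1 := by nlinarith
    nlinarith
  have hε1r : ε ≤ 1 / r := by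
    rw [le_div_iff₀ hr0]; linarith
  set m : ℝ := 1 - ε with hm
  clear_value m
  have hm0 : 0 < m := by
    have : ε < 1 := lt_of_le_of_lt hε1r (by rw [div_lt_one hr0]; exact hr)
    linarith
  have hm1 : m ≤ 1 := by linarith
  -- definitions of P' and P''
  set P' : Fin n → ℝ := fun i => if k * Q i < P i then 0 else P i / m with hP'
  clear_value P'
  have hα0 : 0 < α := by
    rw [hα]
    apply div_pos (by linarith) (by positivity)
  have hα1 : α < 1 := by
    rw [hα, div_lt_one (by positivity)]
    nlinarith
  -- α * P' i ≤ Q i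
  have hdom : ∀ i, α * P' i ≤ Q i := by
    intro i
    simp only [hP']
    by_cases hcase : k * Q i < P i
    · simp [hcase]
      exact hQ0 i
    · simp only [if_neg hcase]
      push_neg at hcase
      have hPk : P i ≤ k * Q i := hcase
      have h1 : α * (P i / m) ≤ α * (k * Q i / m) := by
        apply mul_le_mul_of_nonneg_left _ hα0.le
        exact div_le_div_of_nonneg_right hPk hm0.le
      refine le_trans h1 ?_
      rw [hα]
      have heq : (r - 1) / (r * k) * (k * Q i / m) = (r - 1) * Q i / (r * m) := by
        field_simp
      rw [heq, div_le_iff₀ (mul_pos hr0 hm0)]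
      have hQi0 := hQ0 i
      have hrm : r - 1 ≤ r * m := by
        have h : r * m = r - ε * r := by rw [hm]; ring
        linarith only [h, hεr]
      have h2 := mul_le_mul_of_nonneg_right hrm hQi0
      linarith only [h2]
  set P'' : Fin n → ℝ := fun i => (Q i - α * P' i) / (1 - α) with hP''
  clear_value P''
  -- sums of P'
  have hsumP' : ∑ i, P' i = 1 := by
    simp only [hP']
    have : ∑ i, (if k * Q i < P i then (0:ℝ) else P i / m) =
        (∑ i ∈ A, (0:ℝ)) + ∑ i ∈ Finset.univ.filter (fun i => ¬ k * Q i < P i), P i / m := by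
      rw [hA]
      rw [← Finset.sum_filter_add_sum_filter_not Finset.univ (fun i => k * Q i < P i)]
      congr 1
      · apply Finset.sum_congr rfl
        intro i hi
        rw [Finset.mem_filter] at hi
        rw [if_pos hi.2]
      · apply Finset.sum_congr rfl
        intro i hi
        rw [Finset.mem_filter] at hi
        rw [if_neg hi.2]
    rw [this, Finset.sum_const, smul_zero, zero_add, ← Finset.sum_div]
    have : ∑ i ∈ Finset.univ.filter (fun i => ¬ k * Q i < P i), P i = m := by
      rw [hm]; linarith
    rw [this, div_self hm0.ne']
  have hP'nonneg : ∀ i, 0 ≤ P' i := by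
    intro i
    simp only [hP']
    by_cases hcase : k * Q i < P i
    · simp [hcase]
    · simp only [if_neg hcase]
      exact div_nonneg (hP0 i) hm0.le
  refine ⟨P', P'', ⟨hP'nonneg, hsumP'⟩, ⟨?_, ?_⟩, ?_, ?_⟩
  · intro i
    simp only [hP'']
    have := hdom i
    have h1α : (0:ℝ) < 1 - α := by linarith
    exact div_nonneg (by linarith) h1α.le
  · simp only [hP'']
    have h1α : (0:ℝ) < 1 - α := by linarith
    rw [← Finset.sum_div]
    rw [Finset.sum_sub_distrib, hQs, ← Finset.mul_sum, hsumP', mul_one,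
      div_self h1α.ne']
  · -- L1 distance
    have : ∑ i, |P i - P' i| = ε + ε := by
      simp only [hP']
      rw [← Finset.sum_filter_add_sum_filter_not Finset.univ (fun i => k * Q i < P i)]
      congr 1
      · rw [hε, hA]
        apply Finset.sum_congr rfl
        intro i hi
        rw [Finset.mem_filter] at hi
        rw [if_pos hi.2, sub_zero, abs_of_nonneg (hP0 i)]
      · have step : ∀ i ∈ Finset.univ.filter (fun i => ¬ k * Q i < P i),
            |P i - (if k * Q i < P i then (0:ℝ) else P i / m)| = P i * ((1 - m) / m) := by
          intro i hi
          rw [Finset.mem_filter] at hi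
          rw [if_neg hi.2]
          have h1 : P i - P i / m ≤ 0 := by
            rw [sub_nonpos, le_div_iff₀ hm0]
            exact mul_le_of_le_one_right (hP0 i) hm1
          rw [abs_of_nonpos h1]
          field_simp
          ring
        rw [Finset.sum_congr rfl step, ← Finset.sum_mul]
        have hsumAc : ∑ i ∈ Finset.univ.filter (fun i => ¬ k * Q i < P i), P i = m := by
          rw [hm]; linarith
        rw [hsumAc]
        have hmm : m * ((1 - m) / m) = 1 - m := by field_simp
        rw [hmm, hm]
        ring
    rw [this]
    have h2r : (2:ℝ) / r = 1 / r + 1 / r := by ring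
    linarith
  · intro i
    simp only [hP'']
    have h1α : (0:ℝ) < 1 - α := by linarith
    field_simp
    ring

end
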